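/- Let γ > 0 and ψ ∈ 𝔐_γ(ℝ^d). Then for any s ∈ ℝ, there exists a constant C > 0 such that for all ξ ∈ ℝ^d with ξ ≠ 0 and all multi-indices α with |α| ≤ ⌊d/2⌋ + 1, |∂_ξ^α((1 + ψ(ξ))^s)| ≤ C |ξ|^{−|α|} (1 + ψ(ξ))^s. -/

import Mathlib

open scoped BigOperators

/-- The partial derivative of `f : ℝ^d → F` in the `i`-th coordinate direction. -/
noncomputable def pderivI {d : ℕ} {F : Type*} [NormedAddCommGroup F] [NormedSpace ℝ F]
    (i : Fin d) (f : EuclideanSpace ℝ (Fin d) → F) :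
    EuclideanSpace ℝ (Fin d) → F :=
  fun x => fderiv ℝ f x (EuclideanSpace.single i 1)

/-- The mixed partial derivative `∂^α f` for a multi-index `α : Fin d → ℕ`. -/
noncomputable def mderiv {d : ℕ} {F : Type*} [NormedAddCommGroup F] [NormedSpace ℝ F]
    (α : Fin d → ℕ) (f : EuclideanSpace ℝ (Fin d) → F) :
    EuclideanSpace ℝ (Fin d) → F :=
  (List.ofFn (fun i : Fin d => (pderivI i)^[α i])).foldr (fun g h => g h) f

namespace SymbolAux

variable {d : ℕ}

local notation "E" => EuclideanSpace ℝ (Fin d)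

/-- iterated coordinate derivative along a list (head applied last). -/
noncomputable def D : List (Fin d) → (E → ℝ) → E → ℝ
  | [], f => f
  | i :: L, f => pderivI i (D L f)

@[simp] lemma D_nil (f : E → ℝ) : D [] f = f := rfl
@[simp] lemma D_cons (i : Fin d) (L : List (Fin d)) (f : E → ℝ) :
    D (i :: L) f = pderivI i (D L f) := rfl

lemma D_append (L1 L2 : List (Fin d)) (f : E → ℝ) :
    D (L1 ++ L2) f = D L1 (D L2 f) := by
  induction L1 with
  | nil => rfl
  | cons i L ih => simp [D, ih]

lemma iterate_pderivI (i : Fin d) (n : ℕ) (f : E → ℝ) :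
    (pderivI i)^[n] f = D (List.replicate n i) f := by
  induction n with
  | zero => rfl
  | succ n ih =>
    rw [Function.iterate_succ_apply', ih]
    rfl

lemma foldr_D (ls : List (List (Fin d))) (f : E → ℝ) :
    (ls.map (fun l => D l)).foldr (fun g h => g h) f = D ls.flatten f := by
  induction ls with
  | nil => rfl
  | cons l ls ih => simp [List.flatten, D_append, ih]

/-- canonical list of a multi-index -/
def canL (α : Fin d → ℕ) : List (Fin d) :=
  (List.ofFn (fun i : Fin d => List.replicate (α i) i)).flatten

lemma mderiv_eq_D (α : Fin d → ℕ) (f : E → ℝ) :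
    mderiv α f = D (canL α) f := by
  unfold mderiv canL
  rw [← foldr_D]
  congr 1
  rw [List.map_ofFn]
  congr 1
  funext i
  funext g
  simp only [Function.comp]
  exact iterate_pderivI i (α i) g

lemma canL_length (α : Fin d → ℕ) : (canL α).length = ∑ i, α i := by
  rw [canL, List.length_flatten, List.map_ofFn, List.sum_ofFn]
  exact Finset.sum_congr rfl (fun i _ => by simp)

lemma canL_count (α : Fin d → ℕ) (j : Fin d) : (canL α).count j = α j := by
  rw [canL, List.count_flatten, List.map_ofFn, List.sum_ofFn]
  have : ∑ i : Fin d, ((List.count j ∘ fun i => List.replicate (α i) i) i)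
      = ∑ i : Fin d, if i = j then α i else 0 := by
    refine Finset.sum_congr rfl (fun i _ => ?_)
    by_cases h : i = j <;> simp [List.count_replicate, h]
  rw [this]
  simp


def U (d : ℕ) : Set (EuclideanSpace ℝ (Fin d)) := {ξ | ξ ≠ 0}

lemma isOpenU : IsOpen (U d) := isOpen_ne

lemma memU {ξ : E} (hξ : ξ ≠ 0) : ξ ∈ U d := hξ

lemma pderivI_contDiffOn (i : Fin d) {f : E → ℝ} (hf : ContDiffOn ℝ (⊤:ℕ∞) f (U d)) :
    ContDiffOn ℝ (⊤:ℕ∞) (pderivI i f) (U d) := by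
  have h1 : ContDiffOn ℝ (⊤:ℕ∞) (fderiv ℝ f) (U d) :=
    hf.fderiv_of_isOpen isOpenU (by simp)
  exact h1.clm_apply contDiffOn_const

lemma contDiffAt_of_U {g : E → ℝ} (hg : ContDiffOn ℝ (⊤:ℕ∞) g (U d)) {ξ : E} (hξ : ξ ≠ 0) :
    ContDiffAt ℝ (⊤:ℕ∞) g ξ := hg.contDiffAt (isOpenU.mem_nhds (memU hξ))

lemma diffAt_of_U {g : E → ℝ} (hg : ContDiffOn ℝ (⊤:ℕ∞) g (U d)) {ξ : E} (hξ : ξ ≠ 0) :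
    DifferentiableAt ℝ g ξ :=
  (contDiffAt_of_U hg hξ).differentiableAt (by simp)

lemma pderivI_comm {g : E → ℝ} (hg : ContDiffOn ℝ (⊤:ℕ∞) g (U d)) (a b : Fin d) {ξ : E}
    (hξ : ξ ≠ 0) : pderivI a (pderivI b g) ξ = pderivI b (pderivI a g) ξ := by
  have hat : ContDiffAt ℝ (⊤:ℕ∞) g ξ := contDiffAt_of_U hg hξ
  have h2 : (2 : WithTop ℕ∞) ≤ ((⊤:ℕ∞) : WithTop ℕ∞) := by
    rw [show ((2:WithTop ℕ∞)) = ((2:ℕ∞) : WithTop ℕ∞) by rfl]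
    exact_mod_cast (OrderTop.le_top _ : (2:ℕ∞) ≤ ⊤)
  have hsym := hat.isSymmSndFDerivAt (by simpa [minSmoothness_of_isRCLikeNormedField] using h2)
  have hdf : DifferentiableAt ℝ (fderiv ℝ g) ξ :=
    (hat.fderiv_right (m := (⊤:ℕ∞)) (by simp)).differentiableAt
      (by simp)
  have key : ∀ v w : E,
      fderiv ℝ (fun x => fderiv ℝ g x v) ξ w = fderiv ℝ (fderiv ℝ g) ξ w v := by
    intro v w
    have := fderiv_clm_apply (c := fderiv ℝ g) (u := fun _ => v) hdf (differentiableAt_const v)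
    rw [show (fun x => fderiv ℝ g x v) = (fun y => (fderiv ℝ g y) ((fun _ : E => v) y)) from rfl,
      this]
    simp
  show fderiv ℝ (fun x => fderiv ℝ g x _) ξ _ = fderiv ℝ (fun x => fderiv ℝ g x _) ξ _
  rw [key, key, hsym]


lemma D_contDiffOn (L : List (Fin d)) {f : E → ℝ} (hf : ContDiffOn ℝ (⊤:ℕ∞) f (U d)) :
    ContDiffOn ℝ (⊤:ℕ∞) (D L f) (U d) := by
  induction L with
  | nil => exact hf
  | cons i L ih => exact pderivI_contDiffOn i ih

lemma pderivI_congr {f g : E → ℝ} (h : ∀ ξ : E, ξ ≠ 0 → f ξ = g ξ) (i : Fin d) {ξ : E}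
    (hξ : ξ ≠ 0) : pderivI i f ξ = pderivI i g ξ := by
  have hfg : f =ᶠ[nhds ξ] g := by
    filter_upwards [isOpenU.mem_nhds (memU hξ)] with y hy using h y hy
  unfold pderivI
  rw [hfg.fderiv_eq]

lemma D_perm {f : E → ℝ} (hf : ContDiffOn ℝ (⊤:ℕ∞) f (U d)) {L L' : List (Fin d)}
    (h : L.Perm L') : ∀ ξ : E, ξ ≠ 0 → D L f ξ = D L' f ξ := by
  induction h with
  | nil => intro ξ _; rfl
  | cons i hp ih => intro ξ hξ; exact pderivI_congr ih i hξ
  | swap a b L => intro ξ hξ; exact pderivI_comm (D_contDiffOn L hf) b a hξ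
  | trans h1 h2 ih1 ih2 => intro ξ hξ; rw [ih1 ξ hξ, ih2 ξ hξ]

lemma sum_count_eq_length (β : List (Fin d)) : ∑ i, β.count i = β.length := by
  induction β with
  | nil => simp
  | cons j β ih =>
    simp only [List.count_cons, List.length_cons]
    rw [Finset.sum_add_distrib, ih]
    congr 1
    simp

lemma D_eq_mderiv_count {f : E → ℝ} (hf : ContDiffOn ℝ (⊤:ℕ∞) f (U d)) (β : List (Fin d))
    {ξ : E} (hξ : ξ ≠ 0) : D β f ξ = mderiv (fun i => β.count i) f ξ := by
  rw [mderiv_eq_D]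
  refine D_perm hf ?_ ξ hξ
  rw [List.perm_iff_count]
  intro a
  rw [canL_count]


section Rep

variable (ψ : EuclideanSpace ℝ (Fin d) → ℝ) (s : ℝ)

/-- product of derivatives of ψ over a list of multi-lists -/
noncomputable def PB (B : List (List (Fin d))) (x : E) : ℝ :=
  (B.map (fun β => D β ψ x)).prod

@[simp] lemma PB_nil (x : E) : PB ψ [] x = 1 := by simp [PB]
@[simp] lemma PB_cons (β : List (Fin d)) (B : List (List (Fin d))) (x : E) :
    PB ψ (β :: B) x = D β ψ x * PB ψ B x := by simp [PB]

/-- sum over replacing one factor by its i-derivative -/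
noncomputable def SR (i : Fin d) : List (List (Fin d)) → E → ℝ
  | [] => fun _ => 0
  | β :: B => fun x => D (i :: β) ψ x * PB ψ B x + D β ψ x * SR i B x

/-- evaluation of a single term (c, B) -/
noncomputable def tEval (t : ℝ × List (List (Fin d))) (x : E) : ℝ :=
  t.1 * (1 + ψ x) ^ (s - (t.2.length : ℝ)) * PB ψ t.2 x

/-- evaluation of a list of terms -/
noncomputable def TEval (T : List (ℝ × List (List (Fin d)))) (x : E) : ℝ :=
  (T.map (fun t => tEval ψ s t x)).sum

@[simp] lemma TEval_nil (x : E) : TEval ψ s [] x = 0 := by simp [TEval]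
@[simp] lemma TEval_cons (t) (T) (x : E) :
    TEval ψ s (t :: T) x = tEval ψ s t x + TEval ψ s T x := by simp [TEval]

lemma TEval_append (T1 T2) (x : E) :
    TEval ψ s (T1 ++ T2) x = TEval ψ s T1 x + TEval ψ s T2 x := by
  simp [TEval]

def replTerms (i : Fin d) : List (List (Fin d)) → List (List (List (Fin d)))
  | [] => []
  | β :: B => ((i :: β) :: B) :: (replTerms i B).map (fun B' => β :: B')

lemma replTerms_length (i : Fin d) (B : List (List (Fin d))) :
    (replTerms i B).length = B.length := by
  induction B with
  | nil => rfl
  | cons β B ih => simp [replTerms, ih]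

lemma replTerms_mem_length (i : Fin d) (B : List (List (Fin d))) {B'} (h : B' ∈ replTerms i B) :
    B'.length = B.length := by
  induction B generalizing B' with
  | nil => simp [replTerms] at h
  | cons β B ih =>
    simp only [replTerms, List.mem_cons, List.mem_map] at h
    rcases h with h | ⟨B'', hB'', rfl⟩
    · subst h; simp
    · simp [ih hB'']

lemma replTerms_mem_lengthsum (i : Fin d) (B : List (List (Fin d))) {B'}
    (h : B' ∈ replTerms i B) :
    (B'.map List.length).sum = (B.map List.length).sum + 1 := by
  induction B generalizing B' with
  | nil => simp [replTerms] at h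
  | cons β B ih =>
    simp only [replTerms, List.mem_cons, List.mem_map] at h
    rcases h with h | ⟨B'', hB'', rfl⟩
    · subst h; simp; ring
    · simp only [List.map_cons, List.sum_cons, ih hB'']; ring

lemma replTerms_mem_ne_nil (i : Fin d) (B : List (List (Fin d))) (hB : ∀ β ∈ B, β ≠ [])
    {B'} (h : B' ∈ replTerms i B) : ∀ β ∈ B', β ≠ [] := by
  induction B generalizing B' with
  | nil => simp [replTerms] at h
  | cons β B ih =>
    simp only [replTerms, List.mem_cons, List.mem_map] at h
    rcases h with h | ⟨B'', hB'', rfl⟩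
    · subst h
      intro β' hβ'
      rcases List.mem_cons.1 hβ' with rfl | hm
      · simp
      · exact hB _ (List.mem_cons_of_mem _ hm)
    · intro β' hβ'
      rcases List.mem_cons.1 hβ' with rfl | hm
      · exact hB _ List.mem_cons_self
      · exact ih (fun b hb => hB b (List.mem_cons_of_mem _ hb)) hB'' _ hm

lemma SR_eq_sum_replTerms (i : Fin d) (B : List (List (Fin d))) (x : E) :
    SR ψ i B x = ((replTerms i B).map (fun B' => PB ψ B' x)).sum := by
  induction B with
  | nil => simp [SR, replTerms]
  | cons β B ih =>
    simp only [SR, replTerms, List.map_cons, List.sum_cons, PB_cons, List.map_map]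
    congr 1
    rw [ih, ← List.sum_map_mul_left]
    congr 1


lemma PB_hasFDerivAt (hψ : ContDiffOn ℝ (⊤:ℕ∞) ψ (U d)) (B : List (List (Fin d)))
    {ξ : E} (hξ : ξ ≠ 0) :
    ∃ L : EuclideanSpace ℝ (Fin d) →L[ℝ] ℝ, HasFDerivAt (PB ψ B) L ξ ∧
      ∀ i : Fin d, L (EuclideanSpace.single i 1) = SR ψ i B ξ := by
  induction B with
  | nil =>
    refine ⟨0, ?_, fun i => by simp [SR]⟩
    have : PB ψ ([] : List (List (Fin d))) = fun _ => (1:ℝ) := by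
      funext x; simp
    rw [this]
    exact hasFDerivAt_const 1 ξ
  | cons β B ih =>
    obtain ⟨L, hL, hLi⟩ := ih
    have hD : DifferentiableAt ℝ (D β ψ) ξ := diffAt_of_U (D_contDiffOn β hψ) hξ
    have hmul := hD.hasFDerivAt.mul hL
    refine ⟨D β ψ ξ • L + PB ψ B ξ • fderiv ℝ (D β ψ) ξ, ?_, ?_⟩
    · have : PB ψ (β :: B) = fun y => D β ψ y * PB ψ B y := by
        funext y; simp
      rw [this]; exact hmul
    · intro i
      simp only [ContinuousLinearMap.add_apply, ContinuousLinearMap.smul_apply, smul_eq_mul]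
      rw [hLi i]
      have hDi : fderiv ℝ (D β ψ) ξ (EuclideanSpace.single i 1) = D (i :: β) ψ ξ := rfl
      rw [hDi]
      show _ = SR ψ i (β :: B) ξ
      simp only [SR]
      ring

lemma rpow_hasFDerivAt (hψ : ContDiffOn ℝ (⊤:ℕ∞) ψ (U d)) (hpos : ∀ x, 0 < ψ x) (p : ℝ)
    {ξ : E} (hξ : ξ ≠ 0) :
    HasFDerivAt (fun x => (1 + ψ x) ^ p)
      ((p * (1 + ψ ξ) ^ (p - 1)) • fderiv ℝ ψ ξ) ξ := by
  have hψd : HasFDerivAt ψ (fderiv ℝ ψ ξ) ξ := (diffAt_of_U hψ hξ).hasFDerivAt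
  have h1 : HasFDerivAt (fun x => 1 + ψ x) (fderiv ℝ ψ ξ) ξ := hψd.const_add 1
  have hne : (1 : ℝ) + ψ ξ ≠ 0 := by have := hpos ξ; positivity
  have hr : HasDerivAt (fun y : ℝ => y ^ p) (p * (1 + ψ ξ) ^ (p - 1)) (1 + ψ ξ) :=
    Real.hasDerivAt_rpow_const (Or.inl hne)
  exact hr.comp_hasFDerivAt ξ h1

lemma tEval_hasFDerivAt (hψ : ContDiffOn ℝ (⊤:ℕ∞) ψ (U d)) (hpos : ∀ x, 0 < ψ x)
    (c : ℝ) (B : List (List (Fin d))) {ξ : E} (hξ : ξ ≠ 0) :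
    ∃ L : EuclideanSpace ℝ (Fin d) →L[ℝ] ℝ, HasFDerivAt (tEval ψ s (c, B)) L ξ ∧
      ∀ i : Fin d, L (EuclideanSpace.single i 1)
        = tEval ψ s ((s - (B.length : ℝ)) * c, [i] :: B) ξ
          + c * (1 + ψ ξ) ^ (s - (B.length : ℝ)) * SR ψ i B ξ := by
  obtain ⟨L, hL, hLi⟩ := PB_hasFDerivAt ψ hψ B hξ
  have hrp := rpow_hasFDerivAt ψ hψ hpos (s - (B.length : ℝ)) hξ
  have hmul := (hrp.mul hL).const_mul c
  refine ⟨c • ((1 + ψ ξ) ^ (s - (B.length : ℝ)) • L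
      + PB ψ B ξ • ((s - (B.length : ℝ)) * (1 + ψ ξ) ^ (s - (B.length : ℝ) - 1)) • fderiv ℝ ψ ξ),
    ?_, ?_⟩
  · have : tEval ψ s (c, B) = fun y => c * ((1 + ψ y) ^ (s - (B.length : ℝ)) * PB ψ B y) := by
      funext y; simp [tEval]; ring
    rw [this]; exact hmul
  · intro i
    simp only [ContinuousLinearMap.smul_apply, ContinuousLinearMap.add_apply, smul_eq_mul]
    rw [hLi i]
    have hDi : fderiv ℝ ψ ξ (EuclideanSpace.single i 1) = D [i] ψ ξ := rfl
    rw [hDi]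
    simp only [tEval, PB_cons, List.length_cons]
    push_cast
    rw [show s - ((B.length : ℝ) + 1) = s - (B.length : ℝ) - 1 by ring]
    ring

noncomputable def stepT (i : Fin d) (T : List (ℝ × List (List (Fin d)))) :
    List (ℝ × List (List (Fin d))) :=
  T.flatMap (fun t =>
    ((s - (t.2.length : ℝ)) * t.1, [i] :: t.2) :: (replTerms i t.2).map (fun B' => (t.1, B')))

lemma pderivI_TEval (hψ : ContDiffOn ℝ (⊤:ℕ∞) ψ (U d)) (hpos : ∀ x, 0 < ψ x)
    (i : Fin d) (T : List (ℝ × List (List (Fin d)))) {ξ : E} (hξ : ξ ≠ 0) :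
    pderivI i (TEval ψ s T) ξ = TEval ψ s (stepT s i T) ξ := by
  induction T with
  | nil =>
    have h0 : TEval ψ s ([] : List (ℝ × List (List (Fin d)))) = fun _ => (0:ℝ) := by
      funext x; simp
    rw [show stepT s i ([] : List (ℝ × List (List (Fin d)))) = [] from rfl]
    unfold pderivI
    rw [h0]
    simp
  | cons t T ih =>
    obtain ⟨c, B⟩ := t
    obtain ⟨L, hL, hLi⟩ := tEval_hasFDerivAt ψ s hψ hpos c B hξ
    have hdT : DifferentiableAt ℝ (TEval ψ s T) ξ := by
      clear ih
      induction T with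
      | nil =>
        have h0 : TEval ψ s ([] : List (ℝ × List (List (Fin d)))) = fun _ => (0:ℝ) := by
          funext x; simp
        rw [h0]; exact differentiableAt_const 0
      | cons t' T' ihT =>
        obtain ⟨c', B'⟩ := t'
        obtain ⟨L', hL', _⟩ := tEval_hasFDerivAt ψ s hψ hpos c' B' hξ
        have hsp : TEval ψ s ((c', B') :: T') = fun x => tEval ψ s (c', B') x + TEval ψ s T' x := by
          funext x; simp
        rw [hsp]
        exact hL'.differentiableAt.add ihT
    have hsplit : pderivI i (TEval ψ s ((c, B) :: T)) ξ
        = pderivI i (tEval ψ s (c, B)) ξ + pderivI i (TEval ψ s T) ξ := by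
      unfold pderivI
      have hsp : TEval ψ s ((c, B) :: T) = fun x => tEval ψ s (c, B) x + TEval ψ s T x := by
        funext x; simp
      rw [hsp, fderiv_fun_add hL.differentiableAt hdT]
      simp
    rw [hsplit, ih]
    have h1 : pderivI i (tEval ψ s (c, B)) ξ = L (EuclideanSpace.single i 1) := by
      unfold pderivI; rw [hL.fderiv]
    rw [h1, hLi i]
    have hstep : stepT s i ((c, B) :: T)
        = (((s - (B.length : ℝ)) * c, [i] :: B) :: (replTerms i B).map (fun B' => (c, B')))
          ++ stepT s i T := by
      simp [stepT]
    rw [hstep, TEval_append]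
    congr 1
    simp only [TEval, List.map_cons, List.sum_cons, List.map_map]
    congr 1
    rw [SR_eq_sum_replTerms, ← List.sum_map_mul_left]
    congr 1
    refine List.map_congr_left (fun B' hB' => ?_)
    have hlen := replTerms_mem_length i B hB'
    simp only [Function.comp_apply, tEval, hlen]


def Inv (n : ℕ) (T : List (ℝ × List (List (Fin d)))) : Prop :=
  ∀ t ∈ T, (∀ β ∈ t.2, β ≠ []) ∧ (t.2.map List.length).sum = n

lemma length_le_sum_of_ne_nil (B : List (List (Fin d))) (h : ∀ β ∈ B, β ≠ []) :
    B.length ≤ (B.map List.length).sum := by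
  induction B with
  | nil => simp
  | cons β B ih =>
    simp only [List.map_cons, List.sum_cons, List.length_cons]
    have h1 : 1 ≤ β.length := by
      have hβ := h β List.mem_cons_self
      cases β
      · simp at hβ
      · simp
    have h2 := ih (fun b hb => h b (List.mem_cons_of_mem _ hb))
    omega

lemma stepT_inv (n : ℕ) (i : Fin d) (T : List (ℝ × List (List (Fin d))))
    (hT : Inv n T) : Inv (n+1) (stepT s i T) := by
  intro t' ht'
  rw [stepT, List.mem_flatMap] at ht'
  obtain ⟨t, htT, hmem⟩ := ht'
  obtain ⟨hne, hlen⟩ := hT t htT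
  rcases List.mem_cons.1 hmem with rfl | hmem'
  · constructor
    · intro β hβ
      rcases List.mem_cons.1 hβ with rfl | hb
      · simp
      · exact hne _ hb
    · simp [hlen]
      omega
  · obtain ⟨B', hB', rfl⟩ := List.mem_map.1 hmem'
    exact ⟨replTerms_mem_ne_nil i t.2 hne hB',
      by rw [replTerms_mem_lengthsum i t.2 hB', hlen]⟩

noncomputable def csum (T : List (ℝ × List (List (Fin d)))) : ℝ :=
  (T.map (fun t => |t.1|)).sum

@[simp] lemma csum_nil : csum ([] : List (ℝ × List (List (Fin d)))) = 0 := rfl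
@[simp] lemma csum_cons (t) (T : List (ℝ × List (List (Fin d)))) :
    csum (t :: T) = |t.1| + csum T := by simp [csum]
lemma csum_append (T1 T2 : List (ℝ × List (List (Fin d)))) :
    csum (T1 ++ T2) = csum T1 + csum T2 := by simp [csum]
lemma csum_nonneg (T : List (ℝ × List (List (Fin d)))) : 0 ≤ csum T := by
  induction T with
  | nil => simp
  | cons t T ih => simp only [csum_cons]; positivity

lemma sum_map_const {X : Type*} (l : List X) (a : ℝ) :
    (l.map (fun _ => a)).sum = l.length * a := by
  induction l with
  | nil => simp
  | cons x l ih => simp [ih]; ring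

lemma csum_stepT_le (n : ℕ) (i : Fin d) (T : List (ℝ × List (List (Fin d))))
    (hT : Inv n T) : csum (stepT s i T) ≤ (|s| + 2*(n:ℝ) + 1) * csum T := by
  induction T with
  | nil =>
    simp [stepT]
  | cons t T ih =>
    obtain ⟨c, B⟩ := t
    obtain ⟨hne, hlen⟩ := hT (c, B) List.mem_cons_self
    have hT' : Inv n T := fun t ht => hT t (List.mem_cons_of_mem _ ht)
    have hstep : stepT s i ((c, B) :: T)
        = (((s - (B.length : ℝ)) * c, [i] :: B) :: (replTerms i B).map (fun B' => (c, B')))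
          ++ stepT s i T := by
      simp [stepT]
    rw [hstep, csum_append, csum_cons, csum_cons]
    have hjn : (B.length : ℝ) ≤ (n : ℝ) := by
      have := length_le_sum_of_ne_nil B hne
      rw [hlen] at this
      exact_mod_cast this
    have habs : |(s - (B.length : ℝ)) * c| ≤ (|s| + (n:ℝ)) * |c| := by
      rw [abs_mul]
      have h1 : |s - (B.length : ℝ)| ≤ |s| + (n:ℝ) := by
        calc |s - (B.length : ℝ)| ≤ |s| + |(B.length : ℝ)| := abs_sub _ _
          _ ≤ |s| + (n:ℝ) := by
            rw [abs_of_nonneg (by positivity : (0:ℝ) ≤ (B.length:ℝ))]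
            linarith
      exact mul_le_mul_of_nonneg_right h1 (abs_nonneg c)
    have hmapsum : csum ((replTerms i B).map (fun B' => (c, B'))) ≤ (n:ℝ) * |c| := by
      have : csum ((replTerms i B).map (fun B' => (c, B'))) = (replTerms i B).length * |c| := by
        rw [csum, List.map_map]
        rw [show ((fun t : ℝ × List (List (Fin d)) => |t.1|) ∘ fun B' => (c, B'))
          = (fun _ => |c|) from rfl]
        exact sum_map_const _ _
      rw [this, replTerms_length]
      exact mul_le_mul_of_nonneg_right hjn (abs_nonneg c)
    have ihv := ih hT'
    have hc0 : (0:ℝ) ≤ |c| := abs_nonneg c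
    have hT0 : (0:ℝ) ≤ csum T := csum_nonneg T
    nlinarith [abs_nonneg s]

noncomputable def Acoef (s : ℝ) : ℕ → ℝ
  | 0 => 1
  | n+1 => (|s| + 2*(n:ℝ) + 1) * Acoef s n

lemma one_le_Acoef (s : ℝ) (n : ℕ) : 1 ≤ Acoef s n := by
  induction n with
  | zero => simp [Acoef]
  | succ n ih =>
    have h1 : (1:ℝ) ≤ |s| + 2*(n:ℝ) + 1 := by
      have := abs_nonneg s
      have : (0:ℝ) ≤ (n:ℝ) := n.cast_nonneg
      linarith [abs_nonneg s]
    calc (1:ℝ) = 1 * 1 := by ring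
      _ ≤ (|s| + 2*(n:ℝ) + 1) * Acoef s n := by
        apply mul_le_mul h1 ih (by norm_num) (by positivity)
      _ = Acoef s (n+1) := rfl

lemma Acoef_mono (s : ℝ) : Monotone (Acoef s) := by
  apply monotone_nat_of_le_succ
  intro n
  have h1 : (1:ℝ) ≤ |s| + 2*(n:ℝ) + 1 := by
    have : (0:ℝ) ≤ (n:ℝ) := n.cast_nonneg
    linarith [abs_nonneg s]
  have h2 := one_le_Acoef s n
  calc Acoef s n = 1 * Acoef s n := by ring
    _ ≤ (|s| + 2*(n:ℝ) + 1) * Acoef s n := by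
      apply mul_le_mul_of_nonneg_right h1 (by linarith)
    _ = Acoef s (n+1) := rfl

lemma rep (hψ : ContDiffOn ℝ (⊤:ℕ∞) ψ (U d)) (hpos : ∀ x, 0 < ψ x) (L : List (Fin d)) :
    ∃ T : List (ℝ × List (List (Fin d))), Inv L.length T ∧ csum T ≤ Acoef s L.length ∧
      ∀ ξ : E, ξ ≠ 0 → D L (fun x => (1 + ψ x) ^ s) ξ = TEval ψ s T ξ := by
  induction L with
  | nil =>
    refine ⟨[(1, [])], ?_, ?_, ?_⟩
    · intro t ht
      simp only [List.mem_singleton] at ht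
      subst ht
      simp
    · simp [Acoef]
    · intro ξ hξ
      simp [TEval, tEval]
  | cons i L ih =>
    obtain ⟨T, hInv, hcs, hEq⟩ := ih
    refine ⟨stepT s i T, ?_, ?_, ?_⟩
    · exact stepT_inv s L.length i T hInv
    · calc csum (stepT s i T) ≤ (|s| + 2*(L.length:ℝ) + 1) * csum T :=
          csum_stepT_le s L.length i T hInv
        _ ≤ (|s| + 2*(L.length:ℝ) + 1) * Acoef s L.length := by
          apply mul_le_mul_of_nonneg_left hcs (by positivity)
        _ = Acoef s (L.length + 1) := rfl
    · intro ξ hξ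
      have hd : D (i :: L) (fun x => (1 + ψ x) ^ s) ξ
          = pderivI i (D L (fun x => (1 + ψ x) ^ s)) ξ := rfl
      rw [hd, pderivI_congr hEq i hξ, pderivI_TEval ψ s hψ hpos i T hξ]

lemma PB_bound (μ γ : ℝ) (hμ : 0 ≤ μ) (K : ℕ)
    (hupD : ∀ β : List (Fin d), β ≠ [] → β.length ≤ K → ∀ ξ : E, ξ ≠ 0 →
      |D β ψ ξ| ≤ μ * ‖ξ‖ ^ (γ - (β.length : ℝ)))
    (B : List (List (Fin d))) (hB : ∀ β ∈ B, β ≠ [] ∧ β.length ≤ K)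
    {ξ : E} (hξ : ξ ≠ 0) :
    |PB ψ B ξ| ≤ μ ^ B.length
      * ‖ξ‖ ^ ((B.length : ℝ) * γ - (((B.map List.length).sum : ℕ) : ℝ)) := by
  have hnorm : (0:ℝ) < ‖ξ‖ := by
    simpa [norm_pos_iff] using hξ
  induction B with
  | nil =>
    simp [Real.rpow_zero]
  | cons β B ih =>
    obtain ⟨hne, hlen⟩ := hB β List.mem_cons_self
    have hB' : ∀ b ∈ B, b ≠ [] ∧ b.length ≤ K := fun b hb => hB b (List.mem_cons_of_mem _ hb)
    have h1 := hupD β hne hlen ξ hξ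
    have h2 := ih hB'
    rw [PB_cons, abs_mul]
    have hr1 : (0:ℝ) ≤ μ * ‖ξ‖ ^ (γ - (β.length : ℝ)) := by positivity
    have hr2 : (0:ℝ) ≤ μ ^ B.length
        * ‖ξ‖ ^ ((B.length : ℝ) * γ - (((B.map List.length).sum : ℕ) : ℝ)) := by positivity
    calc |D β ψ ξ| * |PB ψ B ξ|
        ≤ (μ * ‖ξ‖ ^ (γ - (β.length : ℝ)))
          * (μ ^ B.length * ‖ξ‖ ^ ((B.length : ℝ) * γ - (((B.map List.length).sum : ℕ) : ℝ))) :=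
          mul_le_mul h1 h2 (abs_nonneg _) hr1
      _ = (μ * μ ^ B.length) * (‖ξ‖ ^ (γ - (β.length : ℝ))
            * ‖ξ‖ ^ ((B.length : ℝ) * γ - (((B.map List.length).sum : ℕ) : ℝ))) := by ring
      _ = μ ^ (β :: B).length
          * ‖ξ‖ ^ (((β :: B).length : ℝ) * γ - ((((β :: B).map List.length).sum : ℕ) : ℝ)) := by
          have hexp : γ - (β.length:ℝ) + ((B.length:ℝ) * γ - (((B.map List.length).sum : ℕ):ℝ))
              = (((B.length + 1 : ℕ)):ℝ) * γ - (((β.length + (B.map List.length).sum : ℕ)):ℝ) := by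
            push_cast
            ring
          rw [← Real.rpow_add hnorm, hexp]
          simp only [List.length_cons, List.map_cons, List.sum_cons, pow_succ]
          ring


lemma nat_le_sum (l : List ℕ) {a : ℕ} (h : a ∈ l) : a ≤ l.sum := by
  induction l with
  | nil => simp at h
  | cons b l ih =>
    rcases List.mem_cons.1 h with rfl | h'
    · simp
    · have := ih h'
      simp only [List.sum_cons]
      omega

lemma tEval_bound (hpos : ∀ x, 0 < ψ x) (κ μ γ : ℝ) (hκ : 0 < κ) (hμ : 0 ≤ μ) (K : ℕ)
    (hupD : ∀ β : List (Fin d), β ≠ [] → β.length ≤ K → ∀ ξ : E, ξ ≠ 0 →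
      |D β ψ ξ| ≤ μ * ‖ξ‖ ^ (γ - (β.length : ℝ)))
    (hlow : ∀ ξ : E, ξ ≠ 0 → κ * ‖ξ‖ ^ γ ≤ ψ ξ)
    (c : ℝ) (B : List (List (Fin d))) (n : ℕ) (hn : n ≤ K)
    (hne : ∀ β ∈ B, β ≠ []) (hsum : (B.map List.length).sum = n)
    {ξ : E} (hξ : ξ ≠ 0) :
    |tEval ψ s (c, B) ξ| ≤ |c| * (max 1 (μ/κ))^n * ‖ξ‖ ^ (-(n:ℝ)) * (1 + ψ ξ) ^ s := by
  have hX : (0:ℝ) < ‖ξ‖ := by simpa [norm_pos_iff] using hξ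
  have h1ψ : (0:ℝ) < 1 + ψ ξ := by linarith [hpos ξ]
  have hjn : B.length ≤ n := by
    rw [← hsum]
    exact length_le_sum_of_ne_nil B hne
  have hβK : ∀ β ∈ B, β.length ≤ K := by
    intro β hβ
    have h1 : β.length ∈ B.map List.length := List.mem_map_of_mem hβ
    have := nat_le_sum _ h1
    omega
  have hPB := PB_bound ψ μ γ hμ K hupD B (fun β hβ => ⟨hne β hβ, hβK β hβ⟩) hξ
  rw [hsum] at hPB
  have hgb : ‖ξ‖ ^ γ ≤ (1 + ψ ξ) / κ := by
    rw [le_div_iff₀ hκ]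
    have := hlow ξ hξ
    linarith
  have e1 : ‖ξ‖ ^ ((B.length:ℝ) * γ - (n:ℝ)) = (‖ξ‖ ^ γ)^B.length * ‖ξ‖ ^ (-(n:ℝ)) := by
    rw [show (B.length:ℝ)*γ - (n:ℝ) = (B.length:ℝ)*γ + (-(n:ℝ)) by ring, Real.rpow_add hX]
    congr 1
    rw [show (B.length:ℝ)*γ = γ * (B.length:ℝ) by ring, Real.rpow_mul hX.le,
      Real.rpow_natCast]
  have e2 : (1 + ψ ξ) ^ (s - (B.length:ℝ)) = (1 + ψ ξ) ^ s / (1 + ψ ξ)^B.length := by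
    rw [Real.rpow_sub h1ψ, Real.rpow_natCast]
  have habs : |tEval ψ s (c, B) ξ| = |c| * (1 + ψ ξ) ^ (s - (B.length:ℝ)) * |PB ψ B ξ| := by
    rw [tEval, abs_mul, abs_mul, abs_of_pos (Real.rpow_pos_of_pos h1ψ _)]
  calc |tEval ψ s (c, B) ξ|
      = |c| * (1 + ψ ξ) ^ (s - (B.length:ℝ)) * |PB ψ B ξ| := habs
    _ ≤ |c| * (1 + ψ ξ) ^ (s - (B.length:ℝ))
        * (μ ^ B.length * ‖ξ‖ ^ ((B.length:ℝ) * γ - (n:ℝ))) := by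
        have h0 : (0:ℝ) ≤ |c| * (1 + ψ ξ) ^ (s - (B.length:ℝ)) := by positivity
        exact mul_le_mul_of_nonneg_left hPB h0
    _ = |c| * ((1 + ψ ξ) ^ s / (1 + ψ ξ)^B.length)
        * (μ ^ B.length * ((‖ξ‖ ^ γ)^B.length * ‖ξ‖ ^ (-(n:ℝ)))) := by rw [e1, e2]
    _ ≤ |c| * ((1 + ψ ξ) ^ s / (1 + ψ ξ)^B.length)
        * (μ ^ B.length * (((1 + ψ ξ)/κ)^B.length * ‖ξ‖ ^ (-(n:ℝ)))) := by
        have hp : (‖ξ‖ ^ γ)^B.length ≤ ((1 + ψ ξ)/κ)^B.length :=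
          pow_le_pow_left₀ (by positivity) hgb B.length
        have h0 : (0:ℝ) ≤ |c| * ((1 + ψ ξ) ^ s / (1 + ψ ξ)^B.length) := by positivity
        apply mul_le_mul_of_nonneg_left _ h0
        apply mul_le_mul_of_nonneg_left _ (by positivity)
        exact mul_le_mul_of_nonneg_right hp (by positivity)
    _ = |c| * (μ/κ)^B.length * ‖ξ‖ ^ (-(n:ℝ)) * (1 + ψ ξ) ^ s := by
        have hb0 : ((1 + ψ ξ):ℝ)^B.length ≠ 0 := by positivity
        have hk0 : κ ≠ 0 := ne_of_gt hκ
        have hinv : ((1 + ψ ξ)^B.length)⁻¹ * (1 + ψ ξ)^B.length = 1 := inv_mul_cancel₀ hb0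
        simp only [div_eq_mul_inv, mul_pow, inv_pow]
        linear_combination (|c| * (1 + ψ ξ) ^ s * μ ^ B.length * (κ ^ B.length)⁻¹
          * ‖ξ‖ ^ (-(n:ℝ))) * hinv
    _ ≤ |c| * (max 1 (μ/κ))^n * ‖ξ‖ ^ (-(n:ℝ)) * (1 + ψ ξ) ^ s := by
        have h1 : (μ/κ)^B.length ≤ (max 1 (μ/κ))^B.length :=
          pow_le_pow_left₀ (div_nonneg hμ hκ.le) (le_max_right _ _) _
        have h2 : (max 1 (μ/κ))^B.length ≤ (max 1 (μ/κ))^n :=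
          pow_le_pow_right₀ (le_max_left _ _) hjn
        have h3 : (μ/κ)^B.length ≤ (max 1 (μ/κ))^n := le_trans h1 h2
        have h0 : (0:ℝ) ≤ ‖ξ‖ ^ (-(n:ℝ)) * (1 + ψ ξ) ^ s := by positivity
        calc |c| * (μ/κ)^B.length * ‖ξ‖ ^ (-(n:ℝ)) * (1 + ψ ξ) ^ s
            = (|c| * (μ/κ)^B.length) * (‖ξ‖ ^ (-(n:ℝ)) * (1 + ψ ξ) ^ s) := by ring
          _ ≤ (|c| * (max 1 (μ/κ))^n) * (‖ξ‖ ^ (-(n:ℝ)) * (1 + ψ ξ) ^ s) := by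
              apply mul_le_mul_of_nonneg_right _ h0
              exact mul_le_mul_of_nonneg_left h3 (abs_nonneg c)
          _ = |c| * (max 1 (μ/κ))^n * ‖ξ‖ ^ (-(n:ℝ)) * (1 + ψ ξ) ^ s := by ring

lemma TEval_bound (hpos : ∀ x, 0 < ψ x) (κ μ γ : ℝ) (hκ : 0 < κ) (hμ : 0 ≤ μ) (K : ℕ)
    (hupD : ∀ β : List (Fin d), β ≠ [] → β.length ≤ K → ∀ ξ : E, ξ ≠ 0 →
      |D β ψ ξ| ≤ μ * ‖ξ‖ ^ (γ - (β.length : ℝ)))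
    (hlow : ∀ ξ : E, ξ ≠ 0 → κ * ‖ξ‖ ^ γ ≤ ψ ξ)
    (T : List (ℝ × List (List (Fin d)))) (n : ℕ) (hn : n ≤ K) (hT : Inv n T)
    {ξ : E} (hξ : ξ ≠ 0) :
    |TEval ψ s T ξ| ≤ csum T * (max 1 (μ/κ))^n * ‖ξ‖ ^ (-(n:ℝ)) * (1 + ψ ξ) ^ s := by
  induction T with
  | nil => simp
  | cons t T ih =>
    obtain ⟨c, B⟩ := t
    obtain ⟨hne, hlen⟩ := hT (c, B) List.mem_cons_self
    have hT' : Inv n T := fun t ht => hT t (List.mem_cons_of_mem _ ht)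
    have h1 := tEval_bound ψ s hpos κ μ γ hκ hμ K hupD hlow c B n hn hne hlen hξ
    have h2 := ih hT'
    calc |TEval ψ s ((c, B) :: T) ξ| = |tEval ψ s (c, B) ξ + TEval ψ s T ξ| := by
          rw [TEval_cons]
      _ ≤ |tEval ψ s (c, B) ξ| + |TEval ψ s T ξ| := abs_add_le _ _
      _ ≤ |c| * (max 1 (μ/κ))^n * ‖ξ‖ ^ (-(n:ℝ)) * (1 + ψ ξ) ^ s
          + csum T * (max 1 (μ/κ))^n * ‖ξ‖ ^ (-(n:ℝ)) * (1 + ψ ξ) ^ s := add_le_add h1 h2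
      _ = csum ((c, B) :: T) * (max 1 (μ/κ))^n * ‖ξ‖ ^ (-(n:ℝ)) * (1 + ψ ξ) ^ s := by
          rw [csum_cons]
          ring

end Rep

end SymbolAux

/-- If `ψ ∈ 𝔐_γ(ℝ^d)` (positive, `ψ(ξ) ≥ κ|ξ|^γ`, and
`|∂^α ψ(ξ)| ≤ μ |ξ|^{γ-|α|}` for `|α| ≤ ⌊d/2⌋ + 1`), then for any `s ∈ ℝ` there is a
constant `C > 0` such that `|∂^α ((1 + ψ(ξ))^s)| ≤ C |ξ|^{-|α|} (1 + ψ(ξ))^s`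
for all `ξ ≠ 0` and `|α| ≤ ⌊d/2⌋ + 1`. -/
theorem mderiv_one_add_symbol_rpow_bound
    (d : ℕ) (γ κ μ : ℝ) (hγ : 0 < γ) (hκ : 0 < κ) (hμ : 0 < μ)
    (ψ : EuclideanSpace ℝ (Fin d) → ℝ)
    (hpos : ∀ ξ, 0 < ψ ξ)
    (hsmooth : ContDiffOn ℝ (⊤ : ℕ∞) ψ {ξ : EuclideanSpace ℝ (Fin d) | ξ ≠ 0})
    (hlow : ∀ ξ : EuclideanSpace ℝ (Fin d), ξ ≠ 0 → κ * ‖ξ‖ ^ γ ≤ ψ ξ)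
    (hup : ∀ α : Fin d → ℕ, (∑ i, α i) ≤ d / 2 + 1 →
      ∀ ξ : EuclideanSpace ℝ (Fin d), ξ ≠ 0 →
        |mderiv α ψ ξ| ≤ μ * ‖ξ‖ ^ (γ - ((∑ i, α i : ℕ) : ℝ)))
    (s : ℝ) :
    ∃ C : ℝ, 0 < C ∧ ∀ α : Fin d → ℕ, (∑ i, α i) ≤ d / 2 + 1 →
      ∀ ξ : EuclideanSpace ℝ (Fin d), ξ ≠ 0 →
        |mderiv α (fun η : EuclideanSpace ℝ (Fin d) => (1 + ψ η) ^ s) ξ|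
          ≤ C * ‖ξ‖ ^ (-((∑ i, α i : ℕ) : ℝ)) * (1 + ψ ξ) ^ s := by
  classical
  have hψ : ContDiffOn ℝ (⊤:ℕ∞) ψ (SymbolAux.U d) := hsmooth
  set K := d / 2 + 1 with hK
  set M := max 1 (μ / κ) with hM
  have hM1 : (1:ℝ) ≤ M := le_max_left _ _
  have hupD : ∀ β : List (Fin d), β ≠ [] → β.length ≤ K →
      ∀ ξ : EuclideanSpace ℝ (Fin d), ξ ≠ 0 →
      |SymbolAux.D β ψ ξ| ≤ μ * ‖ξ‖ ^ (γ - (β.length : ℝ)) := by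
    intro β _ hβ ξ hξ
    have hsum : ∑ i, β.count i = β.length := SymbolAux.sum_count_eq_length β
    have h := hup (fun i => β.count i) (by rw [hsum]; exact hβ) ξ hξ
    rw [SymbolAux.D_eq_mderiv_count hψ β hξ]
    rw [hsum] at h
    exact h
  refine ⟨SymbolAux.Acoef s K * M ^ K, ?_, ?_⟩
  · have h1 := SymbolAux.one_le_Acoef s K
    have h2 : (0:ℝ) < M ^ K := by positivity
    nlinarith
  · intro α hα ξ hξ
    set n := ∑ i, α i with hn
    obtain ⟨T, hInv, hcs, hEq⟩ := SymbolAux.rep ψ s hψ hpos (SymbolAux.canL α)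
    rw [SymbolAux.mderiv_eq_D, hEq ξ hξ]
    have hlenc : (SymbolAux.canL α).length = n := SymbolAux.canL_length α
    rw [hlenc] at hInv hcs
    have hb := SymbolAux.TEval_bound ψ s hpos κ μ γ hκ hμ.le K hupD hlow T n hα hInv hξ
    refine le_trans hb ?_
    have hA : SymbolAux.csum T ≤ SymbolAux.Acoef s K :=
      le_trans hcs (SymbolAux.Acoef_mono s hα)
    have hMn : M ^ n ≤ M ^ K := pow_le_pow_right₀ hM1 hα
    have h0 : (0:ℝ) ≤ ‖ξ‖ ^ (-(n:ℝ)) * (1 + ψ ξ) ^ s := by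
      have := hpos ξ
      positivity
    have hA0 : (0:ℝ) ≤ SymbolAux.Acoef s K := le_trans zero_le_one (SymbolAux.one_le_Acoef s K)
    calc SymbolAux.csum T * M ^ n * ‖ξ‖ ^ (-(n:ℝ)) * (1 + ψ ξ) ^ s
        = (SymbolAux.csum T * M ^ n) * (‖ξ‖ ^ (-(n:ℝ)) * (1 + ψ ξ) ^ s) := by ring
      _ ≤ (SymbolAux.Acoef s K * M ^ K) * (‖ξ‖ ^ (-(n:ℝ)) * (1 + ψ ξ) ^ s) := by
          apply mul_le_mul_of_nonneg_right _ h0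
          exact mul_le_mul hA hMn (by positivity) hA0
      _ = SymbolAux.Acoef s K * M ^ K * ‖ξ‖ ^ (-(n:ℝ)) * (1 + ψ ξ) ^ s := by ring
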